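/- Let w, p, q, B ∈ ℂ and λ ∈ ℂ with |λ| = 1. Define the 2×2 complex matrices U = [[p/4, −λ⁻¹ e^{w/2}], [λ⁻¹ B e^{−w/2}, −p/4]] and V = [[−q/4, −λ (conj B) e^{−w/2}], [λ e^{w/2}, q/4]]. Then V = −σ₃ U† σ₃ holds if and only if q = conj p and Re(e^{w/2}) = 0 (i.e., e^{w/2} is purely imaginary). -/

import Mathlib

/-- The Pauli matrix `σ₃ = diag(1, -1)`. -/
noncomputable def sigma3 : Matrix (Fin 2) (Fin 2) ℂ := !![1, 0; 0, -1]

theorem su11_reality_iff_minimal (w p q B lam : ℂ) (hlam : ‖lam‖ = 1) :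
    let U : Matrix (Fin 2) (Fin 2) ℂ :=
      !![p / 4, -lam⁻¹ * Complex.exp (w / 2);
         lam⁻¹ * B * Complex.exp (-w / 2), -p / 4]
    let V : Matrix (Fin 2) (Fin 2) ℂ :=
      !![-q / 4, -lam * starRingEnd ℂ B * Complex.exp (-w / 2);
         lam * Complex.exp (w / 2), q / 4]
    (V = -(sigma3 * U.conjTranspose * sigma3) ↔
      (q = starRingEnd ℂ p ∧ (Complex.exp (w / 2)).re = 0)) := by
  have hne : lam ≠ 0 := by
    intro h; rw [h] at hlam; simp at hlam
  have h1 : lam * starRingEnd ℂ lam = 1 := by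
    rw [Complex.mul_conj]
    norm_cast
    rw [Complex.normSq_eq_norm_sq, hlam]; norm_num
  have hc : starRingEnd ℂ lam = lam⁻¹ :=
    (inv_eq_of_mul_eq_one_left (by rwa [mul_comm] at h1)).symm
  have hE : Complex.exp (w / 2) ≠ 0 := Complex.exp_ne_zero _
  have hre : ∀ z : ℂ, z.re = 0 ↔ starRingEnd ℂ z = -z := by
    intro z
    constructor
    · intro h; apply Complex.ext <;> simp [h]
    · intro h
      have := congrArg Complex.re h
      simp at this
      linarith
  show (!![-q / 4, -lam * starRingEnd ℂ B * Complex.exp (-w / 2);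
         lam * Complex.exp (w / 2), q / 4] =
      -(sigma3 * (!![p / 4, -lam⁻¹ * Complex.exp (w / 2);
         lam⁻¹ * B * Complex.exp (-w / 2), -p / 4]).conjTranspose * sigma3) ↔ _)
  rw [← Matrix.ext_iff]
  simp only [Fin.forall_fin_two]
  simp [sigma3, Matrix.mul_apply, Fin.sum_univ_two, Matrix.conjTranspose_apply,
    Matrix.vecMul, dotProduct, map_div₀, map_inv₀, map_ofNat, hc, inv_inv]
  have hwd : (-w) / 2 = -(w / 2) := by ring
  constructor
  · rintro ⟨⟨h00, -⟩, h10, -⟩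
    have hq : q = starRingEnd ℂ p := by
      field_simp at h00
      linear_combination -h00
    refine ⟨hq, (hre _).mpr ?_⟩
    have h10' : Complex.exp (w / 2) = -(starRingEnd ℂ (Complex.exp (w / 2))) :=
      mul_left_cancel₀ hne (by rw [h10]; ring)
    linear_combination h10'
  · rintro ⟨hq, him⟩
    have him' : starRingEnd ℂ (Complex.exp (w / 2)) = -Complex.exp (w / 2) := (hre _).mp him
    have himinv : starRingEnd ℂ (Complex.exp (-w / 2)) = -Complex.exp (-w / 2) := by
      rw [hwd, Complex.exp_neg, map_inv₀, him']
      field_simp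
    refine ⟨⟨by rw [hq]; ring, ?_⟩, ?_, by rw [hq]; ring⟩
    · rw [himinv]; ring
    · rw [him']; ring
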